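/- Jacobi's formula: let f(w) = 1 + Σ_{j≥1} θ_j w^j be a formal power series (θ₀ = 1, θ_j = 0 for j < 0), and suppose det(L_{l,m}(f)) ≠ 0 where L_{l,m}(f) is the m×m Toeplitz matrix with (i,j) entry θ_{l+i−j}. Then the leading coefficient p_{l,m,l} of the numerator P_{l,m}(w) = 1 + p_{l,m,1}w + … + p_{l,m,l}w^l of the [l/m] Padé approximant of f satisfies p_{l,m,l} = det(L_{l,m+1}(f)) / det(L_{l,m}(f)). -/

import Mathlib

open Finset Matrix

/-- The `m × m` Toeplitz matrix `L_{l,m}` with `(i,j)` entry `θ_{l+i-j}`. -/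
noncomputable def toeplitzL (θ : ℤ → ℂ) (l m : ℕ) : Matrix (Fin m) (Fin m) ℂ :=
  Matrix.of fun i j => θ ((l : ℤ) + (i : ℤ) - (j : ℤ))

theorem jacobi_formula (θ : ℤ → ℂ) (hθ0 : θ 0 = 1) (hθneg : ∀ k : ℤ, k < 0 → θ k = 0)
    (l m : ℕ)
    (P Q : Polynomial ℂ) (hPdeg : P.degree ≤ (l : ℕ)) (hQdeg : Q.degree ≤ (m : ℕ))
    (hP0 : P.coeff 0 = 1) (hQ0 : Q.coeff 0 = 1)
    (hpade : ∀ n : ℕ, n ≤ l + m →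
      (∑ i ∈ Finset.range (n + 1), θ (i : ℤ) * Q.coeff (n - i)) = P.coeff n)
    (hdet : (toeplitzL θ l m).det ≠ 0) :
    P.coeff l = (toeplitzL θ l (m + 1)).det / (toeplitzL θ l m).det := by
  set c := P.coeff l with hc
  set A := toeplitzL θ l (m+1) with hA
  set B := toeplitzL θ l m with hB
  have hQcoeff : ∀ j : ℕ, m < j → Q.coeff j = 0 := fun j hj =>
    Polynomial.coeff_eq_zero_of_degree_lt (lt_of_le_of_lt hQdeg (by exact_mod_cast hj))
  have key : ∀ n : ℕ, n ≤ l + m →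
      ∑ j ∈ Finset.range (l + m + 1), θ ((n : ℤ) - (j : ℤ)) * Q.coeff j = P.coeff n := by
    intro n hn
    have h1 : ∑ j ∈ Finset.range (n + 1), θ ((n : ℤ) - (j : ℤ)) * Q.coeff j = P.coeff n := by
      rw [← hpade n hn,
        ← Finset.sum_range_reflect (fun i => θ (i : ℤ) * Q.coeff (n - i)) (n + 1)]
      apply Finset.sum_congr rfl
      intro j hj
      simp only [Finset.mem_range] at hj
      congr 1
      · congr 1; omega
      · congr 1; omega
    rw [← h1]
    symm
    apply Finset.sum_subset (Finset.range_subset_range.2 (by omega))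
    intro j _ hj
    simp only [Finset.mem_range, not_lt] at hj
    rw [hθneg _ (by omega), zero_mul]
  set q : Fin (m + 1) → ℂ := fun j => Q.coeff (j : ℕ) with hq
  have hmul : A.mulVec q = c • (Pi.single 0 1 : Fin (m + 1) → ℂ) := by
    funext i
    have hAi : A.mulVec q i
        = ∑ j ∈ Finset.range (m + 1), θ (((l + (i : ℕ) : ℕ) : ℤ) - (j : ℤ)) * Q.coeff j := by
      rw [Matrix.mulVec, dotProduct,
        ← Fin.sum_univ_eq_sum_range
          (fun j => θ (((l + (i : ℕ) : ℕ) : ℤ) - (j : ℤ)) * Q.coeff j) (m + 1)]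
      apply Finset.sum_congr rfl
      intro j _
      congr 2
      all_goals push_cast
      all_goals try ring
    have hext : ∑ j ∈ Finset.range (m + 1), θ (((l + (i : ℕ) : ℕ) : ℤ) - (j : ℤ)) * Q.coeff j
        = ∑ j ∈ Finset.range (l + m + 1),
            θ (((l + (i : ℕ) : ℕ) : ℤ) - (j : ℤ)) * Q.coeff j := by
      apply Finset.sum_subset (Finset.range_subset_range.2 (by omega))
      intro j _ hj
      simp only [Finset.mem_range, not_lt] at hj
      rw [hQcoeff j (by omega), mul_zero]
    have hi : (i : ℕ) ≤ m := Nat.lt_succ_iff.mp i.isLt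
    have hval : A.mulVec q i = P.coeff (l + (i : ℕ)) := by
      rw [hAi, hext, key (l + (i : ℕ)) (by omega)]
    by_cases h0 : i = 0
    · subst h0
      simpa using hval
    · have : P.coeff (l + (i : ℕ)) = 0 := by
        apply Polynomial.coeff_eq_zero_of_degree_lt
        refine lt_of_le_of_lt hPdeg ?_
        have : 0 < (i : ℕ) := Nat.pos_of_ne_zero (fun h => h0 (Fin.ext (by simpa using h)))
        exact_mod_cast Nat.lt_add_of_pos_right this
      rw [hval, this, Pi.smul_apply, Pi.single_eq_of_ne h0, smul_zero]
  have h3 : A.det • q = c • fun i => A.adjugate i 0 * 1 := by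
    calc A.det • q = (A.det • (1 : Matrix (Fin (m+1)) (Fin (m+1)) ℂ)).mulVec q := by
          rw [smul_mulVec, one_mulVec]
      _ = (A.adjugate * A).mulVec q := by rw [Matrix.adjugate_mul]
      _ = A.adjugate.mulVec (A.mulVec q) := by rw [← mulVec_mulVec]
      _ = A.adjugate.mulVec (c • (Pi.single 0 1 : Fin (m+1) → ℂ)) := by rw [hmul]
      _ = c • A.adjugate.mulVec (Pi.single 0 1 : Fin (m+1) → ℂ) := by rw [mulVec_smul]
      _ = c • fun i => A.adjugate i 0 * 1 := by rw [mulVec_single]; ext i; simp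
  have h4 : A.det = c * B.det := by
    have := congrFun h3 0
    simp only [Pi.smul_apply, smul_eq_mul, mul_one] at this
    have hq0 : q 0 = 1 := by simpa [hq] using hQ0
    rw [hq0, mul_one] at this
    have hadj : A.adjugate 0 0 = B.det := by
      rw [Matrix.adjugate_apply, Matrix.det_succ_row_zero, Fin.sum_univ_succ]
      simp only [Matrix.updateRow_self, Fin.val_zero, pow_zero, one_mul,
        Pi.single_eq_same, Fin.val_succ, Pi.single_eq_of_ne (Fin.succ_ne_zero _),
        mul_zero, zero_mul, Finset.sum_const_zero, add_zero]
      congr 1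
      ext i j
      simp only [Matrix.submatrix_apply, Fin.zero_succAbove,
        Matrix.updateRow_ne (Fin.succ_ne_zero i), hA, hB, toeplitzL, Matrix.of_apply]
      congr 1
      push_cast [Fin.val_succ]
      ring
    rw [hadj] at this
    exact this
  rw [h4]
  field_simp
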